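/- Let e₁ < 0, κ > 0, and M ≥ 0, and let b : [0, ∞) → ℝ be differentiable with |b′(t) − e₁·b(t)| ≤ M ⟨t⟩^{−κ} for all t ≥ 0, where ⟨t⟩ = √(1 + t²). Then there exists a constant C = C(e₁, κ), independent of M and b, such that for all t ≥ 0: |b(t)| ≤ e^{e₁ t} |b(0)| + C·M·(1 + ln⟨t⟩) ⟨t⟩^{−κ}. -/

import Mathlib

open Real Set

-- polynomial beaten by exponential
lemma aux_poly_exp {ε : ℝ} (hε : 0 < ε) (n : ℕ) {t : ℝ} (ht : 0 ≤ t) :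
    (1 + t) ^ n * Real.exp (-(ε * t)) ≤ n.factorial * Real.exp ε / ε ^ n := by
  have h0 : (0:ℝ) ≤ ε * (1 + t) := by positivity
  have h := Real.pow_div_factorial_le_exp (ε * (1 + t)) h0 n
  have hfac : (0:ℝ) < (n.factorial : ℝ) := by positivity
  have hεn : (0:ℝ) < ε ^ n := by positivity
  rw [le_div_iff₀ hεn]
  have hexp : Real.exp (ε * (1 + t)) * Real.exp (-(ε * t)) = Real.exp ε := by
    rw [← Real.exp_add]; ring_nf
  have h2 : (ε * (1 + t)) ^ n * Real.exp (-(ε * t)) ≤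
      (n.factorial : ℝ) * Real.exp ε := by
    calc (ε * (1 + t)) ^ n * Real.exp (-(ε * t))
        ≤ n.factorial * Real.exp (ε * (1 + t)) * Real.exp (-(ε * t)) := by
          apply mul_le_mul_of_nonneg_right _ (Real.exp_pos _).le
          rw [div_le_iff₀ hfac] at h; linarith [h]
      _ = (n.factorial : ℝ) * Real.exp ε := by rw [mul_assoc, hexp]
  calc (1 + t) ^ n * Real.exp (-(ε * t)) * ε ^ n
      = (ε * (1 + t)) ^ n * Real.exp (-(ε * t)) := by rw [mul_pow]; ring
    _ ≤ (n.factorial : ℝ) * Real.exp ε := h2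

set_option maxHeartbeats 2000000 in
theorem stmt14 (e₁ κ : ℝ) (he₁ : e₁ < 0) (hκ : 0 < κ) :
    ∃ C : ℝ, ∀ M : ℝ, 0 ≤ M → ∀ b b' : ℝ → ℝ,
      (∀ t : ℝ, 0 ≤ t → HasDerivAt b (b' t) t) →
      (∀ t : ℝ, 0 ≤ t → |b' t - e₁ * b t| ≤ M * Real.sqrt (1 + t ^ 2) ^ (-κ)) →
      ∀ t : ℝ, 0 ≤ t →
        |b t| ≤ Real.exp (e₁ * t) * |b 0| +
          C * M * (1 + Real.log (Real.sqrt (1 + t ^ 2))) * Real.sqrt (1 + t ^ 2) ^ (-κ) := by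
  set ε : ℝ := -e₁ with hεdef
  have hε : 0 < ε := by simp [hεdef]; linarith
  set n : ℕ := ⌈κ⌉₊ + 1 with hndef
  set K : ℝ := n.factorial * Real.exp ε / ε ^ n with hKdef
  have hK0 : 0 ≤ K := by positivity
  refine ⟨2 / ε + (1 + κ / ε) * Real.exp (2 * κ) * K, ?_⟩
  intro M hM b b' hb hbound t ht
  -- basic facts about s u = sqrt (1+u^2) and p u = s u ^ (-κ)
  set s : ℝ → ℝ := fun u => Real.sqrt (1 + u ^ 2) with hsdef
  have hs1 : ∀ u : ℝ, 1 ≤ s u := fun u => by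
    rw [hsdef]; exact Real.one_le_sqrt.mpr (by nlinarith)
  have hs0 : ∀ u : ℝ, 0 < s u := fun u => lt_of_lt_of_le one_pos (hs1 u)
  set p : ℝ → ℝ := fun u => s u ^ (-κ) with hpdef
  have hp0 : ∀ u : ℝ, 0 < p u := fun u => Real.rpow_pos_of_pos (hs0 u) _
  have hp1 : ∀ u : ℝ, p u ≤ 1 := fun u =>
    Real.rpow_le_one_of_one_le_of_nonpos (hs1 u) (by linarith)
  -- derivative of p
  have hps : ∀ u : ℝ, HasDerivAt s (u / s u) u := by
    intro u
    have h1 : HasDerivAt (fun u : ℝ => 1 + u ^ 2) (2 * u) u := by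
      simpa using ((hasDerivAt_pow 2 u).const_add 1)
    have := h1.sqrt (by nlinarith [sq_nonneg u])
    convert this using 1
    rw [hsdef]; field_simp
  have hsq : ∀ u : ℝ, s u ^ 2 = 1 + u ^ 2 := fun u => by
    simp only [hsdef]; exact Real.sq_sqrt (by nlinarith [sq_nonneg u])
  have hpd : ∀ u : ℝ, HasDerivAt p (-κ * u / (1 + u ^ 2) * p u) u := by
    intro u
    have hsu := hs0 u
    have h := (hps u).rpow_const (p := -κ) (Or.inl (ne_of_gt hsu))
    have hkey : s u ^ (-κ - 1) = s u ^ (-κ) / s u := by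
      rw [div_eq_mul_inv, ← Real.rpow_neg_one (s u), ← Real.rpow_add hsu]; ring_nf
    convert h using 1
    show -κ * u / (1 + u ^ 2) * s u ^ (-κ) = u / s u * -κ * s u ^ (-κ - 1)
    rw [hkey, ← hsq u]
    field_simp
  -- the comparison function W and its derivative
  set A : ℝ := 2 * M / ε with hAdef
  set E : ℝ := M * (1 + κ / ε) * Real.exp (2 * κ) with hEdef
  have hA0 : 0 ≤ A := by positivity
  have hE0 : 0 ≤ E := by positivity
  set W : ℝ → ℝ := fun u => A * Real.exp (ε * u) * p u + E * u with hWdef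
  set W' : ℝ → ℝ := fun u =>
    A * (Real.exp (ε * u) * p u) * (ε - κ * u / (1 + u ^ 2)) + E with hW'def
  have hW : ∀ u : ℝ, HasDerivAt W (W' u) u := by
    intro u
    have h1 : HasDerivAt (fun v : ℝ => Real.exp (ε * v)) (Real.exp (ε * u) * (ε * 1)) u :=
      ((hasDerivAt_id u).const_mul ε).exp
    have h2 := ((h1.mul (hpd u)).const_mul A).add ((hasDerivAt_id u).const_mul E)
    have hfun : (fun x : ℝ => A * (Real.exp (ε * x) * p x) + E * id x) = W := by
      funext x; rw [hWdef]; simp only [id]; ring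
    replace h2 : HasDerivAt (fun x : ℝ => A * (Real.exp (ε * x) * p x) + E * id x) _ u := h2
    rw [hfun] at h2
    convert h2 using 1
    show A * (Real.exp (ε * u) * p u) * (ε - κ * u / (1 + u ^ 2)) + E =
      A * (Real.exp (ε * u) * (ε * 1) * p u +
        Real.exp (ε * u) * (-κ * u / (1 + u ^ 2) * p u)) + E * 1
    ring
  -- the key differential inequality W' ≥ forcing
  have hkey : ∀ u : ℝ, 0 ≤ u → M * (Real.exp (ε * u) * p u) ≤ W' u := by
    intro u hu
    have hXP0 : 0 ≤ Real.exp (ε * u) * p u := (mul_pos (Real.exp_pos _) (hp0 u)).le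
    have hr0 : 0 ≤ κ * u / (1 + u ^ 2) := by positivity
    have hrhalf : κ * u / (1 + u ^ 2) ≤ κ / 2 := by
      rw [div_le_div_iff₀ (by positivity : (0:ℝ) < 1 + u ^ 2) two_pos]
      nlinarith [sq_nonneg (u - 1)]
    show M * (Real.exp (ε * u) * p u) ≤
      A * (Real.exp (ε * u) * p u) * (ε - κ * u / (1 + u ^ 2)) + E
    set X := Real.exp (ε * u) * p u with hXdef
    set r := κ * u / (1 + u ^ 2) with hrdef
    have hAε : A * ε = 2 * M := by rw [hAdef]; field_simp
    rcases le_or_gt u (2 * κ / ε) with hcase | hcase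
    · -- small u
      have hXP1 : X ≤ Real.exp (2 * κ) := by
        rw [hXdef]
        calc Real.exp (ε * u) * p u ≤ Real.exp (ε * u) * 1 :=
              mul_le_mul_of_nonneg_left (hp1 u) (Real.exp_pos _).le
          _ ≤ Real.exp (2 * κ) := by
              rw [mul_one]; apply Real.exp_le_exp.mpr
              calc ε * u ≤ ε * (2 * κ / ε) := mul_le_mul_of_nonneg_left hcase hε.le
                _ = 2 * κ := by field_simp
      have hEeq : E = M * Real.exp (2 * κ) + A * (κ / 2) * Real.exp (2 * κ) := by
        rw [hEdef, hAdef]; field_simp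
      have h1 : 0 ≤ A * X * (ε - r + κ / 2) :=
        mul_nonneg (mul_nonneg hA0 hXP0) (by linarith)
      have h2 : M * X ≤ M * Real.exp (2 * κ) := mul_le_mul_of_nonneg_left hXP1 hM
      have h3 : A * (κ / 2) * X ≤ A * (κ / 2) * Real.exp (2 * κ) :=
        mul_le_mul_of_nonneg_left hXP1 (mul_nonneg hA0 (by linarith))
      rw [hEeq]
      nlinarith [h1, h2, h3]
    · -- large u
      have hu0 : 0 < u := lt_trans (by positivity) hcase
      have h2κ : 2 * κ < u * ε := (div_lt_iff₀ hε).mp hcase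
      have hr2 : r ≤ ε / 2 := by
        rw [hrdef, div_le_div_iff₀ (by positivity : (0:ℝ) < 1 + u ^ 2) two_pos]
        nlinarith [h2κ, hu0, hε, sq_nonneg u]
      calc M * X = A * X * (ε / 2) := by linear_combination (-X / 2) * hAε
        _ ≤ A * X * (ε - r) :=
            mul_le_mul_of_nonneg_left (by linarith) (mul_nonneg hA0 hXP0)
        _ ≤ A * X * (ε - r) + E := le_add_of_nonneg_right hE0
  -- Gronwall-type comparison on [0, t]
  have hf : ContinuousOn (fun u : ℝ => Real.exp (ε * u) * b u) (Icc 0 t) := by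
    intro x hx
    exact (((Real.continuous_exp.comp (continuous_const.mul continuous_id)).continuousAt).mul
      (hb x hx.1).continuousAt).continuousWithinAt
  have hf' : ∀ x ∈ Ico (0:ℝ) t, HasDerivWithinAt (fun u : ℝ => Real.exp (ε * u) * b u)
      (Real.exp (ε * x) * (b' x - e₁ * b x)) (Ici x) x := by
    intro x hx
    have h1 : HasDerivAt (fun v : ℝ => Real.exp (ε * v)) (Real.exp (ε * x) * (ε * 1)) x :=
      ((hasDerivAt_id x).const_mul ε).exp
    have h2 := h1.mul (hb x hx.1)
    have h3 : HasDerivAt (fun u : ℝ => Real.exp (ε * u) * b u)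
        (Real.exp (ε * x) * (b' x - e₁ * b x)) x := by
      replace h2 : HasDerivAt (fun u : ℝ => Real.exp (ε * u) * b u) (Real.exp (ε * x) * (ε * 1) * b x + Real.exp (ε * x) * b' x) x := h2
      convert h2 using 1
      rw [hεdef]; ring
    exact h3.hasDerivWithinAt
  have ha : ‖Real.exp (ε * 0) * b 0‖ ≤ |b 0| + W 0 := by
    have hW0 : W 0 = A := by
      show A * Real.exp (ε * 0) * ((Real.sqrt (1 + (0:ℝ) ^ 2)) ^ (-κ)) + E * 0 = A
      norm_num [Real.sqrt_one, Real.one_rpow]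
    have he0 : Real.exp (ε * 0) = 1 := by norm_num
    rw [Real.norm_eq_abs, he0, one_mul, hW0]
    linarith [hA0]
  have hB : ∀ x : ℝ, HasDerivAt (fun u => |b 0| + W u) (W' x) x := fun x =>
    (hW x).const_add |b 0|
  have hboundW : ∀ x ∈ Ico (0:ℝ) t, ‖Real.exp (ε * x) * (b' x - e₁ * b x)‖ ≤ W' x := by
    intro x hx
    rw [Real.norm_eq_abs, abs_mul, abs_of_pos (Real.exp_pos _)]
    calc Real.exp (ε * x) * |b' x - e₁ * b x|
        ≤ Real.exp (ε * x) * (M * p x) :=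
          mul_le_mul_of_nonneg_left (hbound x hx.1) (Real.exp_pos _).le
      _ = M * (Real.exp (ε * x) * p x) := by ring
      _ ≤ W' x := hkey x hx.1
  have hgron := image_norm_le_of_norm_deriv_right_le_deriv_boundary hf hf' ha hB hboundW
    (right_mem_Icc.mpr ht)
  rw [Real.norm_eq_abs, abs_mul, abs_of_pos (Real.exp_pos _)] at hgron
  -- unwind: |b t| ≤ exp(e₁ t)|b 0| + A p t + E t exp(-ε t)
  have hee : Real.exp (-(ε * t)) * Real.exp (ε * t) = 1 := by
    rw [← Real.exp_add]; simp
  have hexpeq : Real.exp (e₁ * t) = Real.exp (-(ε * t)) := by rw [hεdef]; ring_nf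
  have hbt : |b t| ≤ Real.exp (e₁ * t) * |b 0| + (A * p t + E * (t * Real.exp (-(ε * t)))) := by
    have h1 : |b t| = Real.exp (-(ε * t)) * (Real.exp (ε * t) * |b t|) := by
      rw [← mul_assoc, hee, one_mul]
    have h2 : Real.exp (-(ε * t)) * (Real.exp (ε * t) * |b t|) ≤
        Real.exp (-(ε * t)) * (|b 0| + W t) :=
      mul_le_mul_of_nonneg_left hgron (Real.exp_pos _).le
    have h3 : Real.exp (-(ε * t)) * (|b 0| + W t) =
        Real.exp (-(ε * t)) * |b 0| + (A * p t + E * (t * Real.exp (-(ε * t)))) := by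
      show Real.exp (-(ε * t)) * (|b 0| + (A * Real.exp (ε * t) * p t + E * t)) = _
      linear_combination (A * p t) * hee
    rw [hexpeq, h1]
    linarith [h2, h3.le, h3.ge]
  -- estimate E t exp(-ε t) ≤ E K p t
  have hst : s t ≤ 1 + t := by
    show Real.sqrt (1 + t ^ 2) ≤ 1 + t
    calc Real.sqrt (1 + t ^ 2) ≤ Real.sqrt ((1 + t) ^ 2) :=
          Real.sqrt_le_sqrt (by nlinarith)
      _ = 1 + t := Real.sqrt_sq (by linarith)
  have hstκ : s t ^ κ ≤ (1 + t) ^ (⌈κ⌉₊ : ℕ) := by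
    calc s t ^ κ ≤ (1 + t) ^ κ := Real.rpow_le_rpow (hs0 t).le hst hκ.le
      _ ≤ (1 + t) ^ ((⌈κ⌉₊ : ℕ) : ℝ) :=
          Real.rpow_le_rpow_of_exponent_le (by linarith) (Nat.le_ceil κ)
      _ = (1 + t) ^ (⌈κ⌉₊ : ℕ) := Real.rpow_natCast _ _
  have hstκ0 : 0 ≤ s t ^ κ := Real.rpow_nonneg (hs0 t).le _
  have htpow : t * s t ^ κ * Real.exp (-(ε * t)) ≤ K := by
    calc t * s t ^ κ * Real.exp (-(ε * t))
        ≤ (1 + t) ^ n * Real.exp (-(ε * t)) := by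
          apply mul_le_mul_of_nonneg_right _ (Real.exp_pos _).le
          rw [hndef, pow_succ, mul_comm ((1 + t) ^ (⌈κ⌉₊ : ℕ)) (1 + t)]
          exact mul_le_mul (by linarith) hstκ hstκ0 (by linarith)
      _ ≤ K := by rw [hKdef]; exact aux_poly_exp hε n ht
  have hinv : s t ^ κ * p t = 1 := by
    show s t ^ κ * s t ^ (-κ) = 1
    rw [← Real.rpow_add (hs0 t)]; simp
  have hstep1 : t * Real.exp (-(ε * t)) ≤ K * p t := by
    have hrw : t * Real.exp (-(ε * t)) = t * s t ^ κ * Real.exp (-(ε * t)) * p t := by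
      linear_combination (t * Real.exp (-(ε * t))) * hinv.symm
    rw [hrw]
    exact mul_le_mul_of_nonneg_right htpow (hp0 t).le
  -- conclude
  have hlog : 0 ≤ Real.log (s t) := Real.log_nonneg (hs1 t)
  set C : ℝ := 2 / ε + (1 + κ / ε) * Real.exp (2 * κ) * K with hCdef
  have hC0 : 0 ≤ C := by positivity
  have hmain : |b t| ≤ Real.exp (e₁ * t) * |b 0| + C * M * p t := by
    have h4 : E * (t * Real.exp (-(ε * t))) ≤ E * (K * p t) :=
      mul_le_mul_of_nonneg_left hstep1 hE0
    have h5 : A * p t + E * (K * p t) = C * M * p t := by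
      rw [hCdef, hAdef, hEdef]; field_simp
    linarith [hbt, h4, h5.le, h5.ge]
  show |b t| ≤ Real.exp (e₁ * t) * |b 0| + C * M * (1 + Real.log (s t)) * p t
  have h6 : C * M * p t ≤ C * M * (1 + Real.log (s t)) * p t := by
    nlinarith [mul_nonneg (mul_nonneg (mul_nonneg hC0 hM) hlog) (hp0 t).le]
  linarith [hmain, h6]
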